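/- Let w ∈ V have triangle orbit (w, σ(w), σ²(w) are F-linearly independent) and suppose the S-plane K·w has Type II or Type III. Let T be the F-span of {w, σ(w), σ²(w)}, a σ-invariant 3-dimensional F-subspace. Then ℙ(T) contains exactly g fixed points, T contains exactly g fixed lines (σ-invariant 2-dimensional F-subspaces), and σ does not act as a scalar on any of these g fixed lines. -/

import Mathlib

open Module

noncomputable section

/-- The ambient 9-dimensional space `V = K³` (an `F`-space when `K` is an `F`-algebra). -/
abbrev VK (K : Type*) := K × K × K

/-- The semilinear map `σ(x,y,z) = (z^q, x^q, y^q)` of `V = K³`. -/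
def sig (q : ℕ) {K : Type*} [Field K] (v : VK K) : VK K :=
  (v.2.2 ^ q, v.1 ^ q, v.2.1 ^ q)

/-- The S-plane through `v`, i.e. the 3-dimensional `F`-subspace `K·v`. -/
def Splane (F : Type*) [Field F] {K : Type*} [Field K] [Algebra F K]
    (v : VK K) : Submodule F (VK K) :=
  Submodule.restrictScalars F (Submodule.span K {v})

/-- `[v]` is a fixed point: `σ(v) ∈ F·v`. -/
def IsFixedPt (F : Type*) [Field F] {K : Type*} [Field K] [Algebra F K]
    (q : ℕ) (v : VK K) : Prop :=
  sig q v ∈ Submodule.span F {v}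

/-- `[v]` has collinear orbit: the `F`-span of `{v, σv, σ²v}` is 2-dimensional. -/
def Collin (F : Type*) [Field F] {K : Type*} [Field K] [Algebra F K]
    (q : ℕ) (v : VK K) : Prop :=
  finrank F (Submodule.span F {v, sig q v, sig q (sig q v)}) = 2

/-- `[v]` has triangle orbit: `v, σv, σ²v` are `F`-linearly independent. -/
def Triangle (F : Type*) [Field F] {K : Type*} [Field K] [Algebra F K]
    (q : ℕ) (v : VK K) : Prop :=
  LinearIndependent F ![v, sig q v, sig q (sig q v)]

/-- The S-plane `K·v` has Type I: `σ(v) ∈ K·v`. -/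
def TypeI {K : Type*} [Field K] (q : ℕ) (v : VK K) : Prop :=
  sig q v ∈ Submodule.span K {v}

/-- The S-plane `K·v` has Type II: `v, σv, σ²v` `K`-dependent but `σ(v) ∉ K·v`. -/
def TypeII {K : Type*} [Field K] (q : ℕ) (v : VK K) : Prop :=
  ¬ LinearIndependent K ![v, sig q v, sig q (sig q v)] ∧
    sig q v ∉ Submodule.span K {v}

/-- The S-plane `K·v` has Type III: `v, σv, σ²v` are `K`-linearly independent. -/
def TypeIII {K : Type*} [Field K] (q : ℕ) (v : VK K) : Prop :=
  LinearIndependent K ![v, sig q v, sig q (sig q v)]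

/-- `σ` acts on the subspace `W` as multiplication by a scalar of `F`. -/
def ScalarOn {F : Type*} [Field F] {K : Type*} [Field K] [Algebra F K]
    (q : ℕ) (W : Submodule F (VK K)) : Prop :=
  ∃ c : F, ∀ v ∈ W, sig q v = c • v

/-- A pointwise-fixed plane: 3-dimensional `F`-subspace on which `σ` acts as a scalar. -/
def PtwisePlane {F : Type*} [Field F] {K : Type*} [Field K] [Algebra F K]
    (q : ℕ) (W : Submodule F (VK K)) : Prop :=
  finrank F W = 3 ∧ ScalarOn q W

/-- A fixed line: 2-dimensional `F`-subspace `L` with `σ(L) = L`. -/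
def FixedLine {F : Type*} [Field F] {K : Type*} [Field K] [Algebra F K]
    (q : ℕ) (L : Submodule F (VK K)) : Prop :=
  finrank F L = 2 ∧ sig q '' (L : Set (VK K)) = (L : Set (VK K))

/-- A pointwise-fixed line: fixed line on which `σ` acts as a scalar. -/
def PtwiseLine {F : Type*} [Field F] {K : Type*} [Field K] [Algebra F K]
    (q : ℕ) (L : Submodule F (VK K)) : Prop :=
  FixedLine q L ∧ ScalarOn q L

/-- A fixed-I-line: fixed line, not scalar, contained in some `K·v`. -/
def FixedILine {F : Type*} [Field F] {K : Type*} [Field K] [Algebra F K]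
    (q : ℕ) (L : Submodule F (VK K)) : Prop :=
  FixedLine q L ∧ ¬ ScalarOn q L ∧ ∃ v : VK K, v ≠ 0 ∧ L ≤ Splane F v

/-- A fixed-II-line: fixed line, not scalar, contained in no `K·v`. -/
def FixedIILine {F : Type*} [Field F] {K : Type*} [Field K] [Algebra F K]
    (q : ℕ) (L : Submodule F (VK K)) : Prop :=
  FixedLine q L ∧ ¬ ScalarOn q L ∧ ¬ ∃ v : VK K, v ≠ 0 ∧ L ≤ Splane F v

/-- A hwise-fixed-5-space: 6-dimensional `F`-subspace `W` with `σ(W) = W` such that the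
map induced by `σ` on `V/W` is multiplication by a scalar. -/
def HFix5 {F : Type*} [Field F] {K : Type*} [Field K] [Algebra F K]
    (q : ℕ) (W : Submodule F (VK K)) : Prop :=
  finrank F W = 6 ∧ sig q '' (W : Set (VK K)) = (W : Set (VK K)) ∧
    ∃ c : F, ∀ v : VK K, sig q v - c • v ∈ W

/-- An `H_I`-5-space: a 2-dimensional `K`-subspace `U` of `V` with `σ(U) = U`. -/
def HI5 {K : Type*} [Field K] (q : ℕ) (U : Submodule K (VK K)) : Prop :=
  finrank K U = 2 ∧ sig q '' (U : Set (VK K)) = (U : Set (VK K))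

section MyAux

variable {q : ℕ} {F : Type*} [Field F] [Fintype F] {K : Type*} [Field K] [Fintype K] [Algebra F K]

lemma my_pow_q_add (hF : Fintype.card F = q) (x y : K) : (x + y) ^ q = x ^ q + y ^ q := by
  obtain ⟨n, hp, hcard⟩ := FiniteField.card F (ringChar F)
  haveI : Fact (Nat.Prime (ringChar F)) := ⟨hp⟩
  haveI : CharP K (ringChar F) :=
    charP_of_injective_algebraMap (algebraMap F K).injective (ringChar F)
  rw [← hF, hcard]
  exact add_pow_char_pow x y (ringChar F) n

lemma my_pow_q_smul (hF : Fintype.card F = q) (a : F) (x : K) : (a • x) ^ q = a • x ^ q := by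
  rw [Algebra.smul_def, mul_pow, ← map_pow, ← hF, FiniteField.pow_card, ← Algebra.smul_def]

lemma my_pow_q_cube (hK : Fintype.card K = q ^ 3) (x : K) : ((x ^ q) ^ q) ^ q = x := by
  rw [← pow_mul, ← pow_mul, show q * (q * q) = q ^ 3 by ring, ← hK]
  exact FiniteField.pow_card x

lemma sig_add (hF : Fintype.card F = q) (u v : VK K) :
    sig q (u + v) = sig q u + sig q v := by
  obtain ⟨a, b, c⟩ := u; obtain ⟨a', b', c'⟩ := v
  simp only [sig, Prod.mk_add_mk]
  rw [my_pow_q_add hF, my_pow_q_add hF, my_pow_q_add hF]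

lemma sig_smul (hF : Fintype.card F = q) (a : F) (v : VK K) :
    sig q (a • v) = a • sig q v := by
  obtain ⟨x, y, z⟩ := v
  simp only [sig, Prod.smul_mk]
  rw [my_pow_q_smul hF, my_pow_q_smul hF, my_pow_q_smul hF]

lemma sig_cube (hK : Fintype.card K = q ^ 3) (v : VK K) :
    sig q (sig q (sig q v)) = v := by
  obtain ⟨x, y, z⟩ := v
  simp only [sig]
  rw [my_pow_q_cube hK, my_pow_q_cube hK, my_pow_q_cube hK]

end MyAux

def shiftM (F : Type*) [Field F] : (F × F × F) →ₗ[F] (F × F × F) where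
  toFun v := (v.2.2, v.1, v.2.1)
  map_add' u v := rfl
  map_smul' a v := rfl

@[simp] lemma shiftM_apply {F : Type*} [Field F] (v : F × F × F) :
    shiftM F v = (v.2.2, v.1, v.2.1) := rfl

def eM {F K : Type*} [Field F] [Field K] [Algebra F K] (w0 w1 w2 : VK K) :
    (F × F × F) →ₗ[F] VK K where
  toFun v := v.1 • w0 + v.2.1 • w1 + v.2.2 • w2
  map_add' u v := by
    simp only [Prod.fst_add, Prod.snd_add, add_smul]
    abel
  map_smul' a v := by
    simp only [Prod.smul_fst, Prod.smul_snd, smul_eq_mul, RingHom.id_apply, smul_add, ← smul_smul]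

@[simp] lemma eM_apply {F K : Type*} [Field F] [Field K] [Algebra F K] (w0 w1 w2 : VK K)
    (v : F × F × F) : eM (F := F) w0 w1 w2 v = v.1 • w0 + v.2.1 • w1 + v.2.2 • w2 := rfl

lemma range_pair {α : Type*} (x y : α) : Set.range ![x, y] = {x, y} := by
  ext z
  simp only [Matrix.range_cons, Matrix.range_empty, Set.union_empty, Set.mem_union,
    Set.mem_singleton_iff, Set.mem_insert_iff]
  try tauto

lemma range_triple {α : Type*} (x y z : α) : Set.range ![x, y, z] = {x, y, z} := by
  ext a
  simp only [Matrix.range_cons, Matrix.range_empty, Set.union_empty, Set.mem_union,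
    Set.mem_singleton_iff, Set.mem_insert_iff]
  try tauto
  try tauto

set_option linter.unusedSectionVars false
set_option linter.unusedVariables false

lemma line_class {F : Type*} [Field F] (P : Submodule F (F × F × F))
    (h1 : finrank F P = 1) (h2 : ∀ u ∈ P, shiftM F u ∈ P) :
    ∃ t : F, t ^ 3 = 1 ∧ P = Submodule.span F {((1 : F), t ^ 2, t)} := by
  have hne : P ≠ ⊥ := by
    intro h
    rw [h, finrank_bot] at h1
    omega
  obtain ⟨v, hvP, hv0⟩ := Submodule.exists_mem_ne_zero_of_ne_bot hne
  have hPv : P = Submodule.span F {v} := by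
    refine (Submodule.eq_of_le_of_finrank_eq ?_ ?_).symm
    · exact (Submodule.span_singleton_le_iff_mem v P).mpr hvP
    · rw [finrank_span_singleton hv0, h1]
  obtain ⟨t, ht⟩ := Submodule.mem_span_singleton.mp (hPv ▸ h2 v hvP)
  obtain ⟨a, b, c⟩ := v
  simp only [shiftM_apply, Prod.smul_mk, smul_eq_mul, Prod.mk.injEq] at ht
  obtain ⟨e1, e2, e3⟩ := ht
  have ha : a ≠ 0 := by
    rintro rfl
    rw [mul_zero] at e1
    rw [← e1, mul_zero] at e3
    exact hv0 (by simp [← e1, ← e3])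
  have ht3 : t ^ 3 = 1 := by
    have h' : t ^ 3 * a = 1 * a := by
      rw [one_mul]
      calc t ^ 3 * a = t * (t * (t * a)) := by ring
        _ = a := by rw [e1, e3, e2]
    exact mul_right_cancel₀ ha h'
  refine ⟨t, ht3, ?_⟩
  have hb : b = a * t ^ 2 := by rw [← e3, ← e1]; ring
  have hc : c = a * t := by rw [← e1]; ring
  have hv : (a, b, c) = a • ((1 : F), t ^ 2, t) := by
    simp only [Prod.smul_mk, smul_eq_mul, mul_one]
    rw [hb, hc]
  rw [hPv, hv, Submodule.span_singleton_smul_eq (Ne.isUnit ha)]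

lemma plane_class {F : Type*} [Field F] (L : Submodule F (F × F × F))
    (h1 : finrank F L = 2) (h2 : ∀ u ∈ L, shiftM F u ∈ L) :
    ∃ t : F, t ^ 3 = 1 ∧ L = Submodule.span F {((-t : F), (1:F), (0:F)), ((0 : F), (-t:F), (1:F))} := by
  have hdim : finrank F (F × F × F) = 3 := by
    rw [finrank_prod, finrank_prod, finrank_self]
  have hq1 : finrank F ((F × F × F) ⧸ L) = 1 := by
    have h := Submodule.finrank_quotient_add_finrank L
    rw [h1, hdim] at h
    omega
  have hnt : Nontrivial ((F × F × F) ⧸ L) := by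
    apply Module.nontrivial_of_finrank_pos (R := F)
    omega
  obtain ⟨y, hy0⟩ := exists_ne (0 : (F × F × F) ⧸ L)
  obtain ⟨x, rfl⟩ := Submodule.mkQ_surjective L y
  have htop : Submodule.span F {L.mkQ x} = ⊤ :=
    Submodule.eq_top_of_finrank_eq (by rw [finrank_span_singleton hy0, hq1])
  have hmem : L.mkQ (shiftM F x) ∈ Submodule.span F {L.mkQ x} := htop.symm ▸ Submodule.mem_top
  obtain ⟨t, ht⟩ := Submodule.mem_span_singleton.mp hmem
  have hmkL : ∀ z : F × F × F, L.mkQ z = 0 → z ∈ L := by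
    intro z hz
    rwa [Submodule.mkQ_apply, Submodule.Quotient.mk_eq_zero] at hz
  have key : ∀ v : F × F × F, shiftM F v - t • v ∈ L := by
    intro v
    have hv : L.mkQ v ∈ Submodule.span F {L.mkQ x} := htop.symm ▸ Submodule.mem_top
    obtain ⟨cc, hcc⟩ := Submodule.mem_span_singleton.mp hv
    have h1' : v - cc • x ∈ L := hmkL _ (by rw [map_sub, map_smul, hcc, sub_self])
    have h2' : shiftM F (v - cc • x) ∈ L := h2 _ h1'
    have h3' : shiftM F x - t • x ∈ L := hmkL _ (by rw [map_sub, map_smul, ← ht, sub_self])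
    have heq : shiftM F v - t • v =
        (shiftM F (v - cc • x) - t • (v - cc • x)) + cc • (shiftM F x - t • x) := by
      rw [map_sub, map_smul]
      module
    rw [heq]
    exact add_mem (sub_mem h2' (Submodule.smul_mem _ _ h1')) (Submodule.smul_mem _ _ h3')
  have hu0 : ((-t : F), (1:F), (0:F)) ∈ L := by
    have h := key (1, 0, 0)
    simpa using h
  have hu1 : ((0 : F), (-t:F), (1:F)) ∈ L := by
    have h := key (0, 1, 0)
    simpa using h
  have hu2 : ((1 : F), (0:F), (-t:F)) ∈ L := by
    have h := key (0, 0, 1)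
    simpa using h
  have ht3 : t ^ 3 = 1 := by
    by_contra hne
    have h0 : (1 - t ^ 3 : F) ≠ 0 := sub_ne_zero.mpr (Ne.symm hne)
    have hcomb : ∀ z0 z1 z2 : F × F × F, z0 ∈ L → z1 ∈ L → z2 ∈ L →
        z0 + t • z1 + t ^ 2 • z2 ∈ L := fun z0 z1 z2 m0 m1 m2 =>
      add_mem (add_mem m0 (Submodule.smul_mem _ _ m1)) (Submodule.smul_mem _ _ m2)
    have he0 : ((1 : F), (0:F), (0:F)) ∈ L := by
      have hm : ((1 - t ^ 3 : F), (0:F), (0:F)) ∈ L := by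
        have := hcomb _ _ _ hu2 hu1 hu0
        have heq : ((1 : F), (0:F), (-t:F)) + t • ((0 : F), (-t:F), (1:F)) + t ^ 2 • ((-t : F), (1:F), (0:F))
            = ((1 - t ^ 3 : F), (0:F), (0:F)) := by
          simp only [Prod.smul_mk, smul_eq_mul, Prod.mk_add_mk, Prod.mk.injEq]
          refine ⟨by ring, by ring, by ring⟩
        rwa [heq] at this
      have := Submodule.smul_mem L (1 - t ^ 3)⁻¹ hm
      rwa [show (1 - t ^ 3)⁻¹ • ((1 - t ^ 3 : F), (0 : F), (0 : F)) = ((1 : F), (0:F), (0:F)) by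
        simp [Prod.smul_mk, smul_eq_mul, inv_mul_cancel₀ h0]] at this
    have he1 : ((0 : F), (1:F), (0:F)) ∈ L := by
      have hm : ((0 : F), (1 - t ^ 3:F), (0:F)) ∈ L := by
        have := hcomb _ _ _ hu0 hu2 hu1
        have heq : ((-t : F), (1:F), (0:F)) + t • ((1 : F), (0:F), (-t:F)) + t ^ 2 • ((0 : F), (-t:F), (1:F))
            = ((0 : F), (1 - t ^ 3:F), (0:F)) := by
          simp only [Prod.smul_mk, smul_eq_mul, Prod.mk_add_mk, Prod.mk.injEq]
          refine ⟨by ring, by ring, by ring⟩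
        rwa [heq] at this
      have := Submodule.smul_mem L (1 - t ^ 3)⁻¹ hm
      rwa [show (1 - t ^ 3)⁻¹ • ((0 : F), (1 - t ^ 3 : F), (0 : F)) = ((0 : F), (1:F), (0:F)) by
        simp [Prod.smul_mk, smul_eq_mul, inv_mul_cancel₀ h0]] at this
    have he2 : ((0 : F), (0:F), (1:F)) ∈ L := by
      have hm : ((0 : F), (0:F), (1 - t ^ 3:F)) ∈ L := by
        have := hcomb _ _ _ hu1 hu0 hu2
        have heq : ((0 : F), (-t:F), (1:F)) + t • ((-t : F), (1:F), (0:F)) + t ^ 2 • ((1 : F), (0:F), (-t:F))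
            = ((0 : F), (0:F), (1 - t ^ 3:F)) := by
          simp only [Prod.smul_mk, smul_eq_mul, Prod.mk_add_mk, Prod.mk.injEq]
          refine ⟨by ring, by ring, by ring⟩
        rwa [heq] at this
      have := Submodule.smul_mem L (1 - t ^ 3)⁻¹ hm
      rwa [show (1 - t ^ 3)⁻¹ • ((0 : F), (0 : F), (1 - t ^ 3 : F)) = ((0 : F), (0:F), (1:F)) by
        simp [Prod.smul_mk, smul_eq_mul, inv_mul_cancel₀ h0]] at this
    have hLtop : L = ⊤ := by
      rw [Submodule.eq_top_iff']
      rintro ⟨a, b, c⟩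
      have heq : (a, b, c) = a • ((1 : F), (0 : F), (0 : F)) + b • ((0 : F), (1 : F), (0 : F))
          + c • ((0 : F), (0 : F), (1 : F)) := by
        simp [Prod.smul_mk, smul_eq_mul]
      rw [heq]
      exact add_mem (add_mem (Submodule.smul_mem _ _ he0) (Submodule.smul_mem _ _ he1))
        (Submodule.smul_mem _ _ he2)
    rw [hLtop, finrank_top] at h1
    omega
  refine ⟨t, ht3, ?_⟩
  have hle : Submodule.span F {((-t : F), (1:F), (0:F)), ((0 : F), (-t:F), (1:F))} ≤ L := by
    rw [Submodule.span_le]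
    rintro z (rfl | rfl)
    · exact hu0
    · exact hu1
  have hli : LinearIndependent F ![((-t : F), (1:F), (0:F)), ((0 : F), (-t:F), (1:F))] := by
    rw [LinearIndependent.pair_iff]
    intro s r hsr
    simp only [Prod.smul_mk, smul_eq_mul, Prod.mk_add_mk, Prod.mk_eq_zero] at hsr
    obtain ⟨q1, q2, q3⟩ := hsr
    have hr : r = 0 := by simpa using q3
    have hs : s = 0 := by simpa [hr] using q2
    exact ⟨hs, hr⟩
  have hrank : finrank F (Submodule.span F {((-t : F), (1:F), (0:F)), ((0 : F), (-t:F), (1:F))}) = 2 := by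
    have h := finrank_span_eq_card hli
    rwa [range_pair, Fintype.card_fin] at h
  exact (Submodule.eq_of_le_of_finrank_eq hle (by rw [hrank, h1])).symm
lemma card_cube_roots {q : ℕ} (hq : 2 < q) {F : Type*} [Field F] [Fintype F]
    (hF : Fintype.card F = q) :
    Nat.card {t : F // t ^ 3 = 1} = Nat.gcd 3 (q - 1) := by
  classical
  have hcu : Fintype.card Fˣ = q - 1 := by rw [Fintype.card_units, hF]
  rw [Nat.card_eq_fintype_card, Fintype.card_subtype]
  set S : Finset F := Finset.filter (fun t : F => t ^ 3 = 1) Finset.univ with hS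
  by_cases h3 : (3 : ℕ) ∣ q - 1
  · rw [Nat.gcd_eq_left h3]
    haveI : Fact (Nat.Prime 3) := ⟨by norm_num⟩
    obtain ⟨u, hu⟩ := exists_prime_orderOf_dvd_card 3 (by rw [hcu]; exact h3)
    have hu3 : u ^ 3 = 1 := by rw [← hu]; exact pow_orderOf_eq_one u
    have hune : u ≠ 1 := by
      intro h
      rw [h, orderOf_one] at hu
      norm_num at hu
    have hu2ne : u ^ 2 ≠ 1 := by
      intro h
      have := orderOf_dvd_of_pow_eq_one h
      rw [hu] at this
      norm_num at this
    have huu2 : u ≠ u ^ 2 := by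
      intro h
      have : u ^ 2 = u * u := sq u
      rw [this] at h
      nth_rw 1 [show u = u * 1 by rw [mul_one]] at h
      exact hune (mul_left_cancel h).symm
    -- upper bound
    have hub : S.card ≤ 3 := by
      have hsub : S ⊆ (Polynomial.X ^ 3 - Polynomial.C 1 : Polynomial F).roots.toFinset := by
        intro t htS
        rw [Multiset.mem_toFinset,
          Polynomial.mem_roots (Polynomial.X_pow_sub_C_ne_zero (by norm_num) 1)]
        have ht : t ^ 3 = 1 := (Finset.mem_filter.mp htS).2
        simp [Polynomial.IsRoot, ht]
      calc S.card ≤ _ := Finset.card_le_card hsub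
        _ ≤ Multiset.card (Polynomial.X ^ 3 - Polynomial.C 1 : Polynomial F).roots :=
            Multiset.toFinset_card_le _
        _ ≤ (Polynomial.X ^ 3 - Polynomial.C 1 : Polynomial F).natDegree :=
            Polynomial.card_roots' _
        _ = 3 := Polynomial.natDegree_X_pow_sub_C
    -- lower bound
    have hmem : ∀ v : Fˣ, v ^ 3 = 1 → (v : F) ∈ S := by
      intro v hv
      rw [hS, Finset.mem_filter]
      refine ⟨Finset.mem_univ _, ?_⟩
      rw [← Units.val_pow_eq_pow_val, hv, Units.val_one]
    have hlb : 3 ≤ S.card := by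
      have hsub : ({(1 : F), (u : F), ((u : F)) ^ 2} : Finset F) ⊆ S := by
        intro z hz
        simp only [Finset.mem_insert, Finset.mem_singleton] at hz
        rcases hz with rfl | rfl | rfl
        · exact hmem 1 (one_pow 3)
        · exact hmem u hu3
        · rw [← Units.val_pow_eq_pow_val]
          exact hmem (u ^ 2) (by rw [← pow_mul, show 2 * 3 = 3 * 2 by ring, pow_mul, hu3, one_pow])
      have hcard3 : ({(1 : F), (u : F), ((u : F)) ^ 2} : Finset F).card = 3 := by
        rw [Finset.card_insert_of_notMem, Finset.card_insert_of_notMem, Finset.card_singleton]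
        · simp only [Finset.mem_singleton]
          intro h
          rw [← Units.val_pow_eq_pow_val] at h
          exact huu2 (Units.ext h)
        · simp only [Finset.mem_insert, Finset.mem_singleton]
          push_neg
          constructor
          · intro h
            exact hune (Units.ext (by rw [Units.val_one]; exact h.symm))
          · intro h
            rw [← Units.val_pow_eq_pow_val] at h
            exact hu2ne (Units.ext (by rw [Units.val_one]; exact h.symm))
      calc 3 = _ := hcard3.symm
        _ ≤ S.card := Finset.card_le_card hsub
    omega
  · have hgcd : Nat.gcd 3 (q - 1) = 1 := (Nat.prime_three.coprime_iff_not_dvd).mpr h3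
    rw [hgcd]
    have hSeq : S = {(1 : F)} := by
      ext t
      simp only [hS, Finset.mem_filter, Finset.mem_univ, true_and, Finset.mem_singleton]
      constructor
      · intro ht
        have ht0 : t ≠ 0 := by
          rintro rfl
          rw [zero_pow (by norm_num)] at ht
          exact zero_ne_one ht
        have hiu : IsUnit t := isUnit_iff_ne_zero.mpr ht0
        have hu3 : hiu.unit ^ 3 = 1 := by
          apply Units.ext
          rw [Units.val_pow_eq_pow_val, IsUnit.unit_spec, ht, Units.val_one]
        have hd3 : orderOf hiu.unit ∣ 3 := orderOf_dvd_of_pow_eq_one hu3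
        have hdq : orderOf hiu.unit ∣ q - 1 := by rw [← hcu]; exact orderOf_dvd_card
        have : orderOf hiu.unit ∣ Nat.gcd 3 (q - 1) := Nat.dvd_gcd hd3 hdq
        rw [hgcd, Nat.dvd_one] at this
        have := orderOf_eq_one_iff.mp this
        have := congrArg Units.val this
        rwa [IsUnit.unit_spec, Units.val_one] at this
      · rintro rfl
        exact one_pow 3
    rw [hSeq, Finset.card_singleton]
theorem stmt16' (q : ℕ) (hq : 2 < q)
    (F : Type*) [Field F] [Fintype F] (K : Type*) [Field K] [Fintype K]
    [Algebra F K] (hF : Fintype.card F = q) (hK : Fintype.card K = q ^ 3)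
    (w : VK K) (hw : LinearIndependent F ![w, sig q w, sig q (sig q w)]) :
    finrank F (Submodule.span F {w, sig q w, sig q (sig q w)}) = 3 ∧
    sig q '' ((Submodule.span F {w, sig q w, sig q (sig q w)} :
        Submodule F (VK K)) : Set (VK K)) =
      ((Submodule.span F {w, sig q w, sig q (sig q w)} :
        Submodule F (VK K)) : Set (VK K)) ∧
    Nat.card {P : Submodule F (VK K) //
        P ≤ Submodule.span F {w, sig q w, sig q (sig q w)} ∧ finrank F P = 1 ∧
          ∀ u ∈ P, sig q u ∈ P} = Nat.gcd 3 (q - 1) ∧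
    Nat.card {L : Submodule F (VK K) //
        FixedLine q L ∧ L ≤ Submodule.span F {w, sig q w, sig q (sig q w)}} =
      Nat.gcd 3 (q - 1) ∧
    (∀ L : Submodule F (VK K), FixedLine q L →
      L ≤ Submodule.span F {w, sig q w, sig q (sig q w)} → ¬ ScalarOn q L) := by
  classical
  haveI : Module.Finite F (VK K) := Module.Finite.of_finite
  set w1 := sig q w with hw1
  set w2 := sig q w1 with hw2
  set T : Submodule F (VK K) := Submodule.span F {w, w1, w2} with hT
  have hσw2 : sig q w2 = w := by rw [hw2, hw1]; exact sig_cube hK w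
  set e : (F × F × F) →ₗ[F] VK K := eM w w1 w2 with he
  have he_apply : ∀ v : F × F × F, e v = v.1 • w + v.2.1 • w1 + v.2.2 • w2 := fun v => rfl
  have he0 : ∀ v : F × F × F, e v = 0 → v = 0 := by
    intro v hv
    have hli := Fintype.linearIndependent_iff.mp hw
    have h0 : ∑ i : Fin 3, (![v.1, v.2.1, v.2.2]) i • (![w, w1, w2]) i = 0 := by
      rw [Fin.sum_univ_three]
      simpa [he_apply] using hv
    have hall := hli ![v.1, v.2.1, v.2.2] h0
    have h1 := hall 0
    have h2 := hall 1
    have h3 := hall 2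
    simp only [Matrix.cons_val_zero, Matrix.cons_val_one, Matrix.head_cons,
      Matrix.cons_val_two, Matrix.tail_cons] at h1 h2 h3
    obtain ⟨a, b, c⟩ := v
    simp only [Prod.mk_eq_zero]
    exact ⟨h1, h2, h3⟩
  have he_inj : Function.Injective e := by
    intro a b hab
    have h := he0 (a - b) (by rw [map_sub, hab, sub_self])
    exact sub_eq_zero.mp h
  have he_range : LinearMap.range e = T := by
    apply le_antisymm
    · rintro x ⟨v, rfl⟩
      rw [he_apply]
      have m0 : w ∈ T := Submodule.subset_span (Set.mem_insert _ _)
      have m1 : w1 ∈ T := Submodule.subset_span (Set.mem_insert_of_mem _ (Set.mem_insert _ _))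
      have m2 : w2 ∈ T := Submodule.subset_span
        (Set.mem_insert_of_mem _ (Set.mem_insert_of_mem _ rfl))
      exact add_mem (add_mem (Submodule.smul_mem _ _ m0) (Submodule.smul_mem _ _ m1))
        (Submodule.smul_mem _ _ m2)
    · rw [hT, Submodule.span_le]
      intro x hx
      simp only [Set.mem_insert_iff, Set.mem_singleton_iff] at hx
      rcases hx with rfl | rfl | rfl
      · exact ⟨(1, 0, 0), by simp [he_apply]⟩
      · exact ⟨(0, 1, 0), by simp [he_apply]⟩
      · exact ⟨(0, 0, 1), by simp [he_apply]⟩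
  have hcomm : ∀ v : F × F × F, sig q (e v) = e (shiftM F v) := by
    intro v
    rw [he_apply, he_apply, shiftM_apply]
    rw [sig_add hF, sig_add hF, sig_smul hF, sig_smul hF, sig_smul hF, ← hw1, ← hw2, hσw2]
    abel
  have hTinv : ∀ u, u ∈ T → sig q u ∈ T := by
    intro u hu
    rw [← he_range] at hu ⊢
    obtain ⟨v, rfl⟩ := hu
    exact ⟨shiftM F v, (hcomm v).symm⟩
  have himg : ∀ s : Set (VK K), (∀ u ∈ s, sig q u ∈ s) → sig q '' s = s := by
    intro s hs
    ext y
    constructor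
    · rintro ⟨u, hu, rfl⟩
      exact hs u hu
    · intro hy
      exact ⟨sig q (sig q y), hs _ (hs _ hy), sig_cube hK y⟩
  have goal1 : finrank F T = 3 := by
    have h := finrank_span_eq_card hw
    rwa [range_triple, Fintype.card_fin] at h
  have hmapeq : ∀ P : Submodule F (VK K), P ≤ T → Submodule.map e (Submodule.comap e P) = P :=
    fun P hP => Submodule.map_comap_eq_self (by rw [he_range]; exact hP)
  have hfr : ∀ Q : Submodule F (F × F × F), finrank F (Submodule.map e Q) = finrank F Q :=
    fun Q => (LinearEquiv.finrank_eq (Submodule.equivMapOfInjective e he_inj Q)).symm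
  refine ⟨goal1, himg _ hTinv, ?_, ?_, ?_⟩
  · -- fixed points
    rw [← card_cube_roots hq hF]
    have he_ne : ∀ t : F, e ((1 : F), t ^ 2, t) ≠ 0 := by
      intro t h
      have := he0 _ h
      simp [Prod.mk_eq_zero] at this
    have hsig_evt : ∀ t : F, t ^ 3 = 1 → sig q (e ((1 : F), t ^ 2, t)) = t • e ((1 : F), t ^ 2, t) := by
      intro t ht3
      rw [hcomm, ← map_smul]
      congr 1
      simp only [shiftM_apply, Prod.smul_mk, smul_eq_mul, mul_one]
      rw [show t * t ^ 2 = t ^ 3 by ring, ht3, show t * t = t ^ 2 by ring]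
    let f : {t : F // t ^ 3 = 1} →
        {P : Submodule F (VK K) // P ≤ T ∧ finrank F P = 1 ∧ ∀ u ∈ P, sig q u ∈ P} := fun t =>
      ⟨Submodule.span F {e ((1 : F), t.1 ^ 2, t.1)}, by
        refine ⟨?_, finrank_span_singleton (he_ne t.1), ?_⟩
        · rw [Submodule.span_singleton_le_iff_mem, ← he_range]
          exact ⟨_, rfl⟩
        · intro u hu
          obtain ⟨c, rfl⟩ := Submodule.mem_span_singleton.mp hu
          rw [sig_smul hF, hsig_evt t.1 t.2, smul_smul]
          exact Submodule.smul_mem _ _ (Submodule.mem_span_singleton_self _)⟩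
    symm
    apply Nat.card_eq_of_bijective f
    constructor
    · intro t s h
      have hval : Submodule.span F {e ((1 : F), t.1 ^ 2, t.1)}
          = Submodule.span F {e ((1 : F), s.1 ^ 2, s.1)} := congrArg Subtype.val h
      have hmem : e ((1 : F), s.1 ^ 2, s.1) ∈ Submodule.span F {e ((1 : F), t.1 ^ 2, t.1)} := by
        rw [hval]
        exact Submodule.mem_span_singleton_self _
      obtain ⟨c, hc⟩ := Submodule.mem_span_singleton.mp hmem
      rw [← map_smul] at hc
      have heq := he_inj hc
      simp only [Prod.smul_mk, smul_eq_mul, mul_one, Prod.mk.injEq] at heq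
      obtain ⟨hc1, _, hc3⟩ := heq
      apply Subtype.ext
      rw [← hc3, hc1, one_mul]
    · rintro ⟨P, hPle, hPrank, hPinv⟩
      have hmap : Submodule.map e (Submodule.comap e P) = P := hmapeq P hPle
      have hQrank : finrank F (Submodule.comap e P) = 1 := by
        rw [← hfr (Submodule.comap e P), hmap, hPrank]
      have hQinv : ∀ u ∈ Submodule.comap e P, shiftM F u ∈ Submodule.comap e P := by
        intro u hu
        have h := hPinv _ hu
        rw [hcomm] at h
        exact h
      obtain ⟨t, ht3, hQ⟩ := line_class _ hQrank hQinv
      refine ⟨⟨t, ht3⟩, Subtype.ext ?_⟩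
      show Submodule.span F {e ((1 : F), t ^ 2, t)} = P
      rw [← hmap, hQ, Submodule.map_span, Set.image_singleton]
  · -- fixed lines
    rw [← card_cube_roots hq hF]
    have hpair_li : ∀ t : F, LinearIndependent F
        ![e ((-t : F), (1 : F), (0 : F)), e ((0 : F), (-t : F), (1 : F))] := by
      intro t
      rw [LinearIndependent.pair_iff]
      intro s r hsr
      rw [← map_smul, ← map_smul, ← map_add] at hsr
      have h := he0 _ hsr
      simp only [Prod.smul_mk, smul_eq_mul, Prod.mk_add_mk, Prod.mk_eq_zero] at h
      obtain ⟨k1, k2, k3⟩ := h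
      have hr : r = 0 := by simpa using k3
      have hs : s = 0 := by simpa [hr] using k2
      exact ⟨hs, hr⟩
    have hrank2 : ∀ t : F, finrank F (Submodule.span F
        {e ((-t : F), (1 : F), (0 : F)), e ((0 : F), (-t : F), (1 : F))}) = 2 := by
      intro t
      have h := finrank_span_eq_card (hpair_li t)
      rwa [range_pair, Fintype.card_fin] at h
    have hshift_u1 : ∀ t : F, t ^ 3 = 1 → shiftM F ((0 : F), (-t : F), (1 : F)) =
        (-t ^ 2) • ((-t : F), (1 : F), (0 : F)) + (-t) • ((0 : F), (-t : F), (1 : F)) := by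
      intro t ht3
      simp only [shiftM_apply, Prod.smul_mk, smul_eq_mul, Prod.mk_add_mk, Prod.mk.injEq]
      refine ⟨?_, by ring, by ring⟩
      rw [show -t ^ 2 * -t + -t * 0 = t ^ 3 by ring, ht3]
    have hsig_x0 : ∀ t : F, sig q (e ((-t : F), (1 : F), (0 : F))) =
        e ((0 : F), (-t : F), (1 : F)) := by
      intro t
      rw [hcomm]
      rfl
    have hsig_x1 : ∀ t : F, t ^ 3 = 1 → sig q (e ((0 : F), (-t : F), (1 : F))) =
        (-t ^ 2) • e ((-t : F), (1 : F), (0 : F)) + (-t) • e ((0 : F), (-t : F), (1 : F)) := by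
      intro t ht3
      rw [hcomm, hshift_u1 t ht3, map_add, map_smul, map_smul]
    let g : {t : F // t ^ 3 = 1} → {L : Submodule F (VK K) // FixedLine q L ∧ L ≤ T} := fun t =>
      ⟨Submodule.span F {e ((-t.1 : F), (1 : F), (0 : F)), e ((0 : F), (-t.1 : F), (1 : F))}, by
        have m0 : e ((-t.1 : F), (1 : F), (0 : F)) ∈ Submodule.span F
            {e ((-t.1 : F), (1 : F), (0 : F)), e ((0 : F), (-t.1 : F), (1 : F))} :=
          Submodule.subset_span (Set.mem_insert _ _)
        have m1 : e ((0 : F), (-t.1 : F), (1 : F)) ∈ Submodule.span F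
            {e ((-t.1 : F), (1 : F), (0 : F)), e ((0 : F), (-t.1 : F), (1 : F))} :=
          Submodule.subset_span (Set.mem_insert_of_mem _ rfl)
        have hinv : ∀ u ∈ Submodule.span F
            {e ((-t.1 : F), (1 : F), (0 : F)), e ((0 : F), (-t.1 : F), (1 : F))},
            sig q u ∈ Submodule.span F
            {e ((-t.1 : F), (1 : F), (0 : F)), e ((0 : F), (-t.1 : F), (1 : F))} := by
          intro u hu
          obtain ⟨a, b, hab⟩ := Submodule.mem_span_pair.mp hu
          rw [← hab, sig_add hF, sig_smul hF, sig_smul hF, hsig_x0, hsig_x1 t.1 t.2]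
          exact add_mem (Submodule.smul_mem _ _ m1)
            (Submodule.smul_mem _ _ (add_mem (Submodule.smul_mem _ _ m0)
              (Submodule.smul_mem _ _ m1)))
        refine ⟨⟨hrank2 t.1, himg _ hinv⟩, ?_⟩
        rw [Submodule.span_le]
        rintro x (rfl | rfl)
        · rw [← he_range]; exact ⟨_, rfl⟩
        · rw [← he_range]; exact ⟨_, rfl⟩⟩
    symm
    apply Nat.card_eq_of_bijective g
    constructor
    · intro t s h
      have hval : Submodule.span F
          {e ((-t.1 : F), (1 : F), (0 : F)), e ((0 : F), (-t.1 : F), (1 : F))}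
          = Submodule.span F
          {e ((-s.1 : F), (1 : F), (0 : F)), e ((0 : F), (-s.1 : F), (1 : F))} :=
        congrArg Subtype.val h
      have hmem : e ((-t.1 : F), (1 : F), (0 : F)) ∈ Submodule.span F
          {e ((-s.1 : F), (1 : F), (0 : F)), e ((0 : F), (-s.1 : F), (1 : F))} := by
        rw [← hval]
        exact Submodule.subset_span (Set.mem_insert _ _)
      obtain ⟨a, b, hab⟩ := Submodule.mem_span_pair.mp hmem
      rw [← map_smul, ← map_smul, ← map_add] at hab
      have heq := he_inj hab
      simp only [Prod.smul_mk, smul_eq_mul, Prod.mk_add_mk, Prod.mk.injEq] at heq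
      obtain ⟨k1, k2, k3⟩ := heq
      have hb : b = 0 := by simpa using k3
      have ha : a = 1 := by simpa [hb] using k2
      apply Subtype.ext
      have : a * -s.1 + b * 0 = -t.1 := k1
      rw [ha, hb] at this
      simp only [one_mul, zero_mul, add_zero, neg_inj] at this
      exact this.symm
    · rintro ⟨L, ⟨⟨hLrank, hLimg⟩, hLle⟩⟩
      have hLpt : ∀ u ∈ L, sig q u ∈ L := by
        intro u hu
        have : sig q u ∈ sig q '' (L : Set (VK K)) := Set.mem_image_of_mem _ hu
        rwa [hLimg] at this
      have hmap : Submodule.map e (Submodule.comap e L) = L := hmapeq L hLle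
      have hQrank : finrank F (Submodule.comap e L) = 2 := by
        rw [← hfr (Submodule.comap e L), hmap, hLrank]
      have hQinv : ∀ u ∈ Submodule.comap e L, shiftM F u ∈ Submodule.comap e L := by
        intro u hu
        have h := hLpt _ hu
        rw [hcomm] at h
        exact h
      obtain ⟨t, ht3, hQ⟩ := plane_class _ hQrank hQinv
      refine ⟨⟨t, ht3⟩, Subtype.ext ?_⟩
      show Submodule.span F
          {e ((-t : F), (1 : F), (0 : F)), e ((0 : F), (-t : F), (1 : F))} = L
      rw [← hmap, hQ, Submodule.map_span, Set.image_insert_eq, Set.image_singleton]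
  · -- no scalar action on fixed lines
    rintro L ⟨hLrank, hLimg⟩ hLle ⟨c, hc⟩
    have hmap : Submodule.map e (Submodule.comap e L) = L := hmapeq L hLle
    have hQrank : finrank F (Submodule.comap e L) = 2 := by
      rw [← hfr (Submodule.comap e L), hmap, hLrank]
    have hQE : ∀ v ∈ Submodule.comap e L, shiftM F v = c • v := by
      intro v hv
      apply he_inj
      rw [← hcomm, map_smul]
      exact hc (e v) hv
    set Ec := LinearMap.ker (shiftM F - c • (LinearMap.id : (F × F × F) →ₗ[F] F × F × F))
      with hEcdef
    have hQle : Submodule.comap e L ≤ Ec := by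
      intro v hv
      rw [hEcdef, LinearMap.mem_ker, LinearMap.sub_apply, LinearMap.smul_apply,
        LinearMap.id_apply, hQE v hv, sub_self]
    have hEc : ∀ x : F × F × F, x ∈ Ec → x = (c * x.2.1, x.2.1, c * (c * x.2.1)) := by
      intro x hx
      rw [hEcdef, LinearMap.mem_ker, LinearMap.sub_apply, LinearMap.smul_apply,
        LinearMap.id_apply] at hx
      obtain ⟨a, b, d⟩ := x
      simp only [shiftM_apply, Prod.smul_mk, smul_eq_mul, Prod.mk_sub_mk, Prod.mk_eq_zero] at hx
      obtain ⟨k1, k2, k3⟩ := hx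
      have ha : a = c * b := by
        have := sub_eq_zero.mp k2
        exact this
      have hd : d = c * a := sub_eq_zero.mp k1
      simp only [Prod.mk.injEq, and_true, true_and, eq_self_iff_true]
      exact ⟨ha, by rw [hd, ha]⟩
    let φ : Ec →ₗ[F] F := (LinearMap.fst F F F).comp ((LinearMap.snd F F (F × F)).comp Ec.subtype)
    have hφinj : Function.Injective φ := by
      intro x y hxy
      apply Subtype.ext
      have hx := hEc x.1 x.2
      have hy := hEc y.1 y.2
      have hcoord : (x.1).2.1 = (y.1).2.1 := hxy
      rw [hx, hy, hcoord]
    have hE1 : finrank F Ec ≤ 1 := by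
      have h := LinearMap.finrank_le_finrank_of_injective hφinj
      rwa [finrank_self] at h
    have hmono := Submodule.finrank_mono hQle
    omega

/-- the fixed plane spanned by a triangle orbit in a Type-II or Type-III
S-plane contains exactly g fixed points and g fixed lines, none of which is pointwise
fixed. -/
theorem stmt16 (q : ℕ) (hq : 2 < q)
    (F : Type*) [Field F] [Fintype F] (K : Type*) [Field K] [Fintype K]
    [Algebra F K] (hF : Fintype.card F = q) (hK : Fintype.card K = q ^ 3)
    (w : VK K) (hw : Triangle F q w) (hwT : TypeII q w ∨ TypeIII q w) :
    finrank F (Submodule.span F {w, sig q w, sig q (sig q w)}) = 3 ∧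
    sig q '' ((Submodule.span F {w, sig q w, sig q (sig q w)} :
        Submodule F (VK K)) : Set (VK K)) =
      ((Submodule.span F {w, sig q w, sig q (sig q w)} :
        Submodule F (VK K)) : Set (VK K)) ∧
    Nat.card {P : Submodule F (VK K) //
        P ≤ Submodule.span F {w, sig q w, sig q (sig q w)} ∧ finrank F P = 1 ∧
          ∀ u ∈ P, sig q u ∈ P} = Nat.gcd 3 (q - 1) ∧
    Nat.card {L : Submodule F (VK K) //
        FixedLine q L ∧ L ≤ Submodule.span F {w, sig q w, sig q (sig q w)}} =
      Nat.gcd 3 (q - 1) ∧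
    (∀ L : Submodule F (VK K), FixedLine q L →
      L ≤ Submodule.span F {w, sig q w, sig q (sig q w)} → ¬ ScalarOn q L) := by
  exact stmt16' q hq F K hF hK w hw
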